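/- arXiv:2602.09592 — 3 statements merged into one kernel-verified Lean document; each statement's English description precedes it below -/
import Mathlib

section
/- If μ and θ are infinite cardinals with μ = μ^θ, then Sep₁(μ, μ, 2^μ, θ, θ) holds. -/
open Cardinal Set

namespace BB

noncomputable abbrev oLift (o : Ordinal.{0}) : Ordinal.{1} := Ordinal.lift.{1, 0} o
noncomputable abbrev cLift (c : Cardinal.{0}) : Cardinal.{1} := Cardinal.lift.{1, 0} c

/-- `^μ∂`: the set of functions from `μ` to `∂`, coded as functions on the
ordinals vanishing on `[μ, ∞)`. -/
def Fn (a b : Ordinal) : Set (Ordinal → Ordinal) :=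
  {ν | (∀ α < a, ν α < b) ∧ ∀ α, a ≤ α → ν α = 0}

/-- `Sep₁(χ, μ, ∂, θ, Υ)`. -/
def Sep1 (χ μ par θ Ups : Cardinal) : Prop :=
  ∃ f : Ordinal → (Ordinal → Ordinal) → Ordinal,
    (∀ ε < χ.ord, ∀ ν ∈ Fn μ.ord par.ord, f ε ν < θ.ord) ∧
    ∀ ϱ : Ordinal → Ordinal, (∀ ε < χ.ord, ϱ ε < θ.ord) →
      Cardinal.mk {ν | ν ∈ Fn μ.ord par.ord ∧ ∀ ε < χ.ord, f ε ν ≠ ϱ ε} < cLift Ups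

lemma core {M T : Type} (hM : Nonempty M) (hT : Nonempty T)
    (hC : Nonempty ((T → ((T → M) × (T → Bool))) ≃ M)) :
    ∃ F : M → (M → Bool) → T, ∀ ϱ : M → T,
      Cardinal.mk {ν : M → Bool | ∀ m, F m ν ≠ ϱ m} < Cardinal.mk T := by
  classical
  obtain ⟨s⟩ := hC
  set C := T → ((T → M) × (T → Bool)) with hCdef
  let Match : C → T → (M → Bool) → Prop :=
    fun c i ν => ∀ k, ν ((c i).1 k) = (c i).2 k
  let F : M → (M → Bool) → T := fun m ν =>
    if h : ∃! i, Match (s.symm m) i ν then h.exists.choose else Classical.arbitrary T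
  have hF : ∀ (c : C) (ν : M → Bool) (i : T), Match c i ν → (∀ i', Match c i' ν → i' = i) →
      F (s c) ν = i := by
    intro c ν i hm hu
    rw [← Equiv.symm_apply_apply s c] at hm hu
    have hcond : ∃! i', Match (s.symm (s c)) i' ν := ⟨i, hm, hu⟩
    have heq : F (s c) ν = hcond.exists.choose := dif_pos hcond
    rw [heq]
    exact hu _ hcond.exists.choose_spec
  refine ⟨F, fun ϱ => ?_⟩
  by_contra hlt
  push_neg at hlt
  obtain ⟨inj⟩ := Cardinal.le_def T _ |>.mp hlt
  have hdist : ∀ i k : T, i ≠ k → ∃ m, (inj i).1 m ≠ (inj k).1 m := by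
    intro i k hik
    by_contra hc; push_neg at hc
    exact hik (inj.injective (Subtype.ext (funext fun m => hc m)))
  choose d hd using hdist
  let D : T → T → M := fun i k => if h : i = k then Classical.arbitrary M else d i k h
  let c : C := fun i => (fun k => D i k, fun k => (inj i).1 (D i k))
  have hmatch : ∀ i : T, Match c i (inj i).1 := fun i k => rfl
  have huniq : ∀ i i' : T, Match c i' (inj i).1 → i' = i := by
    intro i i' hm
    by_contra hne
    have hthis := hm i
    simp only [c, Match] at hthis
    have hDi : D i' i = d i' i hne := dif_neg hne
    rw [hDi] at hthis
    exact hd i' i hne hthis.symm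
  have hval : ∀ i : T, F (s c) (inj i).1 = i :=
    fun i => hF c (inj i).1 i (hmatch i) (fun i' h => huniq i i' h)
  exact (inj (ϱ (s c))).2 (s c) (hval (ϱ (s c)))

lemma card_codes {μ θ : Cardinal.{0}} (hμ : ℵ₀ ≤ μ) (h : μ ^ θ = μ)
    {M T : Type} (hM : #M = μ) (hT : #T = θ) :
    #(T → ((T → M) × (T → Bool))) = #M := by
  have h2 : (2 : Cardinal) ≤ μ := le_trans (le_of_lt (by exact_mod_cast nat_lt_aleph0 2)) hμ
  have h2θ : (2 : Cardinal) ^ θ ≤ μ := le_trans (power_le_power_right h2) (le_of_eq h)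
  have hP : #((T → M) × (T → Bool)) = μ := by
    simp only [mk_prod, lift_id]
    rw [← power_def, ← power_def, mk_bool, hM, hT, h]
    refine le_antisymm ?_ ?_
    · calc μ * 2 ^ θ ≤ μ * μ := mul_le_mul_right h2θ μ
        _ = μ := mul_eq_self hμ
    · exact le_mul_right (power_ne_zero θ two_ne_zero)
  rw [← power_def, hP, hT, hM, h]

theorem stmt6 (μ θ : Cardinal) (hμ : ℵ₀ ≤ μ) (hθ : ℵ₀ ≤ θ) (h : μ = μ ^ θ) :
    Sep1 μ μ ((2 : Cardinal) ^ μ) θ θ := by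
  classical
  set κ := μ.ord with hκ
  set τ := θ.ord with hτ
  set δ := ((2 : Cardinal) ^ μ).ord with hδ
  let M := κ.ToType
  let T := τ.ToType
  let D := δ.ToType
  have hMc : #M = μ := by rw [Cardinal.mk_toType, Cardinal.card_ord]
  have hTc : #T = θ := by rw [Cardinal.mk_toType, Cardinal.card_ord]
  have hDc : #D = (2 : Cardinal) ^ μ := by rw [Cardinal.mk_toType, Cardinal.card_ord]
  have hMne : Nonempty M := mk_ne_zero_iff.mp (by rw [hMc]; exact ne_of_gt (lt_of_lt_of_le aleph0_pos hμ))
  have hTne : Nonempty T := mk_ne_zero_iff.mp (by rw [hTc]; exact ne_of_gt (lt_of_lt_of_le aleph0_pos hθ))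
  let eμ := (Ordinal.ToType.mk (o := κ))
  let eτ := (Ordinal.ToType.mk (o := τ))
  let eδ := (Ordinal.ToType.mk (o := δ))
  -- pairing equivalence
  have hpair : #(M × M) = #M := by
    simp only [mk_prod, lift_id]
    rw [hMc, mul_eq_self hμ]
  let pEq : M × M ≃ M := Classical.choice (Cardinal.eq.mp hpair)
  have hcode : #D = #(M → Bool) := by
    rw [hDc, ← power_def, mk_bool, hMc]
  let cEq : D ≃ (M → Bool) := Classical.choice (Cardinal.eq.mp hcode)
  -- coding of elements of Fn as functions M → Bool
  let code : (Ordinal → Ordinal) → (M → Bool) := fun ν m =>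
    if h : ν ((eμ.symm (pEq.symm m).1).val) < δ
    then cEq (eδ ⟨_, h⟩) (pEq.symm m).2 else false
  have hcode_eval : ∀ (ν : Ordinal → Ordinal) (a b : M) (hh : ν ((eμ.symm a).val) < δ),
      code ν (pEq (a, b)) = cEq (eδ ⟨_, hh⟩) b := by
    intro ν a b hh
    simp only [code, Equiv.symm_apply_apply]
    rw [dif_pos hh]
  have hcode_inj : ∀ ν₁ ∈ Fn κ δ, ∀ ν₂ ∈ Fn κ δ, code ν₁ = code ν₂ → ν₁ = ν₂ := by
    intro ν₁ h₁ ν₂ h₂ hcc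
    funext α
    rcases lt_or_ge α κ with hα | hα
    · set a := eμ ⟨α, hα⟩ with ha
      have hav : (eμ.symm a).val = α := by rw [ha, OrderIso.symm_apply_apply]
      have hv1 : ν₁ α < δ := h₁.1 α hα
      have hv2 : ν₂ α < δ := h₂.1 α hα
      have hv1' : ν₁ ((eμ.symm a).val) < δ := by rw [hav]; exact hv1
      have hv2' : ν₂ ((eμ.symm a).val) < δ := by rw [hav]; exact hv2
      have hfun : cEq (eδ ⟨ν₁ ((eμ.symm a).val), hv1'⟩) = cEq (eδ ⟨ν₂ ((eμ.symm a).val), hv2'⟩) := by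
        funext b
        rw [← hcode_eval ν₁ a b hv1', ← hcode_eval ν₂ a b hv2', hcc]
      have := Subtype.ext_iff.mp (eδ.injective (cEq.injective hfun))
      simpa [hav] using this
    · rw [h₁.2 α hα, h₂.2 α hα]
  obtain ⟨F, hF⟩ := core hMne hTne (Cardinal.eq.mp (card_codes hμ h.symm hMc hTc))
  let idx : Ordinal → M := fun ε => if h : ε < κ then eμ ⟨ε, h⟩ else Classical.arbitrary M
  refine ⟨fun ε ν => (eτ.symm (F (idx ε) (code ν))).val, ?_, ?_⟩
  · intro ε _ ν _
    exact (eτ.symm (F (idx ε) (code ν))).2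
  · intro ϱ hϱ
    let ϱ' : M → T := fun m =>
      if h : ϱ ((eμ.symm m).val) < τ then eτ ⟨_, h⟩ else Classical.arbitrary T
    have hkey : ∀ ν : Ordinal → Ordinal, ν ∈ Fn κ δ →
        (∀ ε < κ, (eτ.symm (F (idx ε) (code ν))).val ≠ ϱ ε) →
        ∀ m, F m (code ν) ≠ ϱ' m := by
      intro ν hν hbad m hFm
      set ε := (eμ.symm m).val with hε
      have hεκ : ε < κ := (eμ.symm m).2
      have hidx : idx ε = m := by
        have : (⟨ε, hεκ⟩ : Set.Iio κ) = eμ.symm m := rfl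
        simp only [idx, dif_pos hεκ, this, OrderIso.apply_symm_apply]
      have hϱε : ϱ ε < τ := hϱ ε hεκ
      have hϱ' : ϱ' m = eτ ⟨ϱ ε, hϱε⟩ := dif_pos hϱε
      apply hbad ε hεκ
      rw [hidx, hFm, hϱ', OrderIso.symm_apply_apply]
    -- injection from the concrete bad set into ULift of the abstract bad set
    have hle : Cardinal.mk {ν | ν ∈ Fn κ δ ∧ ∀ ε < κ, (eτ.symm (F (idx ε) (code ν))).val ≠ ϱ ε}
        ≤ Cardinal.lift.{1} (Cardinal.mk {ν' : M → Bool | ∀ m, F m ν' ≠ ϱ' m}) := by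
      rw [← mk_uLift]
      refine mk_le_of_injective (f := fun ν =>
        ULift.up ⟨code ν.1, hkey ν.1 ν.2.1 ν.2.2⟩) ?_
      intro ν₁ ν₂ hh
      have hcc : code ν₁.1 = code ν₂.1 := congrArg (fun x => (ULift.down x).val) hh
      exact Subtype.ext (hcode_inj _ ν₁.2.1 _ ν₂.2.1 hcc)
    refine lt_of_le_of_lt hle ?_
    have hlt' := hF ϱ'
    rw [hTc] at hlt'
    exact Cardinal.lift_lt.mpr hlt'


end BB
end

section
/- Let χ, μ, ∂, θ be cardinals with 2 ≤ ∂ and 2 ≤ θ, let κ be an infinite regular cardinal, and let 𝒟 be a nonempty upward-closed family of subsets of κ. If cf(∂^μ) > κ, then: Sep₂(χ, μ, ∂, θ, κ, 𝒟) implies Sep₃(cf(∂^μ); χ, μ, ∂, θ, κ, 𝒟), and Sep₃(cf(∂^μ); χ, μ, ∂, θ, κ, 𝒟) implies Sep₄(cf(∂^μ); χ, μ, ∂, θ, κ, 𝒟). -/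
open Cardinal Set

namespace BB

/-- `Sep₂(χ, μ, ∂, θ, κ, 𝒟)`. -/
def Sep2 (χ μ par θ κ : Cardinal) (𝒟 : Set (Set Ordinal)) : Prop :=
  ∃ f : Ordinal → Ordinal → (Ordinal → Ordinal) → Ordinal,
    (∀ ε < χ.ord, ∀ i < κ.ord, ∀ ν ∈ Fn μ.ord par.ord, f ε i ν < θ.ord) ∧
    ∀ P : Ordinal → Set (Ordinal → Ordinal),
      (∀ i < κ.ord, P i ⊆ Fn μ.ord par.ord ∧ Cardinal.mk (P i) < cLift (par ^ μ)) →
      ∃ ϱ : Ordinal → Ordinal → Ordinal,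
        (∀ i < κ.ord, ∀ ζ < μ.ord, ϱ i ζ < θ.ord) ∧
        ∀ ν : Ordinal → (Ordinal → Ordinal), (∀ i < κ.ord, ν i ∈ P i) →
          ∃ ε < χ.ord, ∃ u ∈ 𝒟, ∀ i ∈ u, f ε i (ν i) = ϱ i ε

/-- `[κ]^κ`, the family of subsets of `κ` of cardinality `κ`. -/
def fullFam (κ : Cardinal) : Set (Set Ordinal) :=
  {u | u ⊆ Set.Iio κ.ord ∧ Cardinal.mk u = cLift κ}

/-- `Sep₃(λ; χ, μ, ∂, θ, κ, 𝒟)`. -/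
def Sep3 (lam χ μ par θ κ : Cardinal) (𝒟 : Set (Set Ordinal)) : Prop :=
  ∃ f : Ordinal → Ordinal → (Ordinal → Ordinal) → Ordinal,
  ∃ P : Ordinal → Set (Ordinal → Ordinal),
    (∀ ε < χ.ord, ∀ i < κ.ord, ∀ ν ∈ Fn μ.ord par.ord, f ε i ν < θ.ord) ∧
    (∀ ξ < lam.ord, P ξ ⊆ Fn μ.ord par.ord) ∧
    (∀ ξ < lam.ord, ∀ ζ, ξ < ζ → ζ < lam.ord → P ξ ⊂ P ζ) ∧
    (∀ ν ∈ Fn μ.ord par.ord, ∃ ξ < lam.ord, ν ∈ P ξ) ∧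
    ∀ ξ < lam.ord, ∃ ϱ : Ordinal → Ordinal → Ordinal,
      (∀ i < κ.ord, ∀ ζ < μ.ord, ϱ i ζ < θ.ord) ∧
      ∀ ν : Ordinal → (Ordinal → Ordinal), (∀ i < κ.ord, ν i ∈ P ξ) →
        ∃ ε < χ.ord, ∃ u ∈ 𝒟, ∀ i ∈ u, f ε i (ν i) = ϱ i ε

/-- `^κ(^μ∂)`: κ-sequences of members of `^μ∂`, coded as functions vanishing
on `[κ, ∞)`. -/
def SeqFn (κo μo paro : Ordinal) : Set (Ordinal → Ordinal → Ordinal) :=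
  {ν | (∀ i < κo, ν i ∈ Fn μo paro) ∧ ∀ i, κo ≤ i → ν i = fun _ => 0}

/-- `Sep₄(λ; χ, μ, ∂, θ, κ, 𝒟)`. -/
def Sep4 (lam χ μ par θ κ : Cardinal) (𝒟 : Set (Set Ordinal)) : Prop :=
  ∃ f : Ordinal → Ordinal → (Ordinal → Ordinal) → Ordinal,
  ∃ P : Ordinal → Set (Ordinal → Ordinal → Ordinal),
    (∀ ε < χ.ord, ∀ i < κ.ord, ∀ ν ∈ Fn μ.ord par.ord, f ε i ν < θ.ord) ∧
    (∀ ξ < lam.ord, P ξ ⊆ SeqFn κ.ord μ.ord par.ord) ∧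
    (∀ ξ < lam.ord, ∀ ζ, ξ < ζ → ζ < lam.ord → P ξ ⊂ P ζ) ∧
    (∀ ν ∈ SeqFn κ.ord μ.ord par.ord, ∃ ξ < lam.ord, ν ∈ P ξ) ∧
    ∀ ξ < lam.ord, ∃ ϱ : Ordinal → Ordinal → Ordinal,
      (∀ i < κ.ord, ∀ ζ < μ.ord, ϱ i ζ < θ.ord) ∧
      ∀ ν ∈ P ξ, ∃ ε < χ.ord, ∃ u ∈ 𝒟, ∀ i ∈ u, f ε i (ν i) = ϱ i ε

noncomputable def fnEquiv (a b : Ordinal) : ↥(Fn a b) ≃ (Set.Iio a → Set.Iio b) where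
  toFun ν := fun α => ⟨ν.1 α.1, ν.2.1 α.1 α.2⟩
  invFun g := ⟨fun α => if h : α < a then (g ⟨α, h⟩).1 else 0,
    fun α hα => by dsimp only; rw [dif_pos hα]; exact (g ⟨α, hα⟩).2,
    fun α hα => by dsimp only; rw [dif_neg (not_lt.mpr hα)]⟩
  left_inv ν := by
    apply Subtype.ext
    funext α
    by_cases h : α < a
    · simp [h]
    · simp only [dif_neg h]
      exact (ν.2.2 α (not_lt.mp h)).symm
  right_inv g := by
    funext α
    apply Subtype.ext
    dsimp
    rw [dif_pos (show α.1 < a from α.2)]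

lemma mk_Fn (a b : Ordinal) : Cardinal.mk (Fn a b) = cLift (b.card ^ a.card) := by
  rw [Cardinal.mk_congr (fnEquiv a b), ← Cardinal.power_def,
    Ordinal.mk_Iio_ordinal, Ordinal.mk_Iio_ordinal, ← Cardinal.lift_power]

lemma exists_chain (par μ : Cardinal) (holim : Order.IsSuccLimit ((par ^ μ).ord)) :
    ∃ P : Ordinal → Set (Ordinal → Ordinal),
      (∀ ξ < ((par ^ μ).ord).cof.ord, P ξ ⊆ Fn μ.ord par.ord) ∧
      (∀ ξ < ((par ^ μ).ord).cof.ord, Cardinal.mk (P ξ) < cLift (par ^ μ)) ∧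
      (∀ ξ < ((par ^ μ).ord).cof.ord, ∀ ζ, ξ < ζ → ζ < ((par ^ μ).ord).cof.ord → P ξ ⊂ P ζ) ∧
      (∀ ν ∈ Fn μ.ord par.ord, ∃ ξ < ((par ^ μ).ord).cof.ord, ν ∈ P ξ) := by
  set o := (par ^ μ).ord with ho
  obtain ⟨fs, hfs⟩ := Ordinal.exists_fundamental_sequence o
  have hcard : Cardinal.mk (Set.Iio o) = Cardinal.mk (Fn μ.ord par.ord) := by
    rw [Ordinal.mk_Iio_ordinal, mk_Fn]
    simp [ho, Cardinal.card_ord]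
  obtain ⟨e⟩ := Cardinal.eq.mp hcard
  set g : Ordinal → Ordinal := fun ξ => if h : ξ < o.cof.ord then fs ξ h else 0 with hgdef
  have hg_lt : ∀ ξ < o.cof.ord, g ξ < o := by
    intro ξ h
    rw [hgdef]
    simp only [dif_pos h]
    conv_rhs => rw [← hfs.2.2]
    exact Ordinal.lt_blsub _ _ _
  have hg_mono : ∀ ξ ζ, ξ < ζ → ζ < o.cof.ord → g ξ < g ζ := by
    intro ξ ζ hξζ hζ
    have hξ : ξ < o.cof.ord := hξζ.trans hζ
    rw [hgdef]
    simp only [dif_pos hξ, dif_pos hζ]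
    exact hfs.2.1 hξ hζ hξζ
  refine ⟨fun ξ => {x | ∃ β : Set.Iio o, (e β).1 = x ∧ β.1 < g ξ}, ?_, ?_, ?_, ?_⟩
  · rintro ξ hξ x ⟨β, rfl, -⟩
    exact (e β).2
  · intro ξ hξ
    have hlt : g ξ < o := hg_lt ξ hξ
    have hsur : Function.Surjective
        (fun β : Set.Iio (g ξ) =>
          (⟨(e ⟨β.1, β.2.trans hlt⟩).1, ⟨β.1, β.2.trans hlt⟩, rfl, β.2⟩ :
            {x | ∃ β : Set.Iio o, (e β).1 = x ∧ β.1 < g ξ})) := by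
      rintro ⟨x, β, rfl, hβ⟩
      exact ⟨⟨β.1, hβ⟩, rfl⟩
    calc Cardinal.mk {x | ∃ β : Set.Iio o, (e β).1 = x ∧ β.1 < g ξ}
        ≤ Cardinal.mk (Set.Iio (g ξ)) := Cardinal.mk_le_of_surjective hsur
      _ = cLift (g ξ).card := Ordinal.mk_Iio_ordinal _
      _ < cLift (par ^ μ) := Cardinal.lift_lt.mpr (Cardinal.lt_ord.mp hlt)
  · intro ξ hξ ζ hξζ hζ
    have hsub : {x | ∃ β : Set.Iio o, (e β).1 = x ∧ β.1 < g ξ} ⊆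
        {x | ∃ β : Set.Iio o, (e β).1 = x ∧ β.1 < g ζ} := by
      rintro x ⟨β, rfl, hβ⟩
      exact ⟨β, rfl, hβ.trans (hg_mono ξ ζ hξζ hζ)⟩
    refine (Set.ssubset_iff_of_subset hsub).mpr ?_
    have hlt : g ξ < o := (hg_mono ξ ζ hξζ hζ).trans (hg_lt ζ hζ)
    refine ⟨(e ⟨g ξ, hlt⟩).1, ⟨⟨g ξ, hlt⟩, rfl, hg_mono ξ ζ hξζ hζ⟩, ?_⟩
    rintro ⟨β, hβe, hβ⟩
    have : β = ⟨g ξ, hlt⟩ := e.injective (Subtype.ext hβe)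
    rw [this] at hβ
    exact lt_irrefl _ hβ
  · intro ν hν
    set x : ↥(Fn μ.ord par.ord) := ⟨ν, hν⟩ with hx
    set β := e.symm x with hβdef
    have hβ : Order.succ (β : Ordinal) < Ordinal.blsub o.cof.ord fs := by
      rw [hfs.2.2]; exact holim.succ_lt β.2
    obtain ⟨ξ, hξ, h⟩ := Ordinal.lt_blsub_iff.mp hβ
    have h : (β : Ordinal) < fs ξ hξ := Order.succ_le_iff.mp h
    refine ⟨ξ, hξ, β, ?_, ?_⟩
    · rw [hβdef, e.apply_symm_apply]
    · have hgξ : g ξ = fs ξ hξ := dif_pos hξ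
      rw [hgξ]
      exact h

theorem stmt10 (χ μ par θ κ : Cardinal) (𝒟 : Set (Set Ordinal))
    (hpar2 : 2 ≤ par) (hθ2 : 2 ≤ θ) (hκ : κ.IsRegular)
    (h𝒟ne : 𝒟.Nonempty) (h𝒟sub : ∀ u ∈ 𝒟, u ⊆ Set.Iio κ.ord)
    (h𝒟up : ∀ u ∈ 𝒟, ∀ v, u ⊆ v → v ⊆ Set.Iio κ.ord → v ∈ 𝒟)
    (hcf : κ < ((par ^ μ).ord).cof) :
    (Sep2 χ μ par θ κ 𝒟 → Sep3 ((par ^ μ).ord).cof χ μ par θ κ 𝒟) ∧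
    (Sep3 ((par ^ μ).ord).cof χ μ par θ κ 𝒟 →
      Sep4 ((par ^ μ).ord).cof χ μ par θ κ 𝒟) := by
  have hℵκ : ℵ₀ ≤ κ := hκ.1
  have holim : Order.IsSuccLimit ((par ^ μ).ord) := by
    rcases Ordinal.zero_or_succ_or_isSuccLimit (par ^ μ).ord with h | ⟨a, h⟩ | h
    · rw [h, Ordinal.cof_zero] at hcf
      exact absurd hcf (Cardinal.zero_le κ).not_gt
    · rw [← h, Ordinal.cof_succ] at hcf
      exact absurd (hℵκ.trans_lt hcf) (not_lt.mpr Cardinal.one_lt_aleph0.le)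
    · exact h
  have hreg : (((par ^ μ).ord).cof).IsRegular := Cardinal.isRegular_cof holim
  constructor
  · rintro ⟨f, hf, hsep⟩
    obtain ⟨P, hsub, hcard, hmono, hunion⟩ := exists_chain par μ holim
    refine ⟨f, P, hf, hsub, hmono, hunion, ?_⟩
    intro ξ hξ
    obtain ⟨ϱ, hϱ, h⟩ := hsep (fun _ => P ξ) (fun i _ => ⟨hsub ξ hξ, hcard ξ hξ⟩)
    exact ⟨ϱ, hϱ, h⟩
  · rintro ⟨f, P, hf, hsub, hmono, hunion, hsep⟩
    have h0 : (0 : Ordinal) < κ.ord := by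
      have h1 := Cardinal.ord_le_ord.mpr hℵκ
      rw [Cardinal.ord_aleph0] at h1
      exact lt_of_lt_of_le Ordinal.omega0_pos h1
    refine ⟨f, fun ξ => {ν | ν ∈ SeqFn κ.ord μ.ord par.ord ∧ ∀ i < κ.ord, ν i ∈ P ξ},
      hf, fun ξ _ ν hν => hν.1, ?_, ?_, ?_⟩
    · -- strict monotonicity
      intro ξ hξ ζ hξζ hζ
      have hPP := hmono ξ hξ ζ hξζ hζ
      have hsub2 : {ν | ν ∈ SeqFn κ.ord μ.ord par.ord ∧ ∀ i < κ.ord, ν i ∈ P ξ} ⊆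
          {ν | ν ∈ SeqFn κ.ord μ.ord par.ord ∧ ∀ i < κ.ord, ν i ∈ P ζ} :=
        fun ν hν => ⟨hν.1, fun i hi => hPP.1 (hν.2 i hi)⟩
      refine (Set.ssubset_iff_of_subset hsub2).mpr ?_
      obtain ⟨ν₀, hν₀ζ, hν₀ξ⟩ := Set.exists_of_ssubset hPP
      refine ⟨fun i => if i < κ.ord then ν₀ else fun _ => 0, ⟨⟨?_, ?_⟩, ?_⟩, ?_⟩
      · intro i hi
        simp only [if_pos hi]
        exact hsub ζ hζ hν₀ζ
      · intro i hi
        simp only [if_neg (not_lt.mpr hi)]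
      · intro i hi
        simp only [if_pos hi]
        exact hν₀ζ
      · rintro ⟨-, h⟩
        have h2 := h 0 h0
        simp only [if_pos h0] at h2
        exact hν₀ξ h2
    · -- union
      intro ν hν
      have H : ∀ i, i < κ.ord → ∃ ξ, ξ < ((par ^ μ).ord).cof.ord ∧ ν i ∈ P ξ := by
        intro i hi
        obtain ⟨ξ, hξ, h⟩ := hunion (ν i) (hν.1 i hi)
        exact ⟨ξ, hξ, h⟩
      choose Ξ hΞ1 hΞ2 using H
      set F : κ.ord.ToType → Ordinal := fun t =>
        Ξ ((Ordinal.ToType.mk (o := κ.ord)).symm t).1 ((Ordinal.ToType.mk (o := κ.ord)).symm t).2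
        with hFdef
      have hF : iSup F < (((par ^ μ).ord).cof).ord := by
        refine Cardinal.iSup_lt_ord_of_isRegular hreg ?_ ?_
        · rw [Cardinal.mk_ord_toType]
          exact hcf
        · intro t
          exact hΞ1 _ _
      refine ⟨iSup F, hF, hν, ?_⟩
      intro i hi
      have key : Ξ i hi ≤ iSup F := by
        have h1 := Ordinal.le_iSup F (Ordinal.ToType.mk (o := κ.ord) ⟨i, hi⟩)
        rw [hFdef] at h1
        simpa using h1
      rcases lt_or_eq_of_le key with h | h
      · exact (hmono _ (hΞ1 i hi) _ h hF).1 (hΞ2 i hi)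
      · exact h ▸ hΞ2 i hi
    · -- separation
      intro ξ hξ
      obtain ⟨ϱ, hϱ, h⟩ := hsep ξ hξ
      exact ⟨ϱ, hϱ, fun ν hν => h ν hν.2⟩

end BB
end

section
/- Let κ be an infinite regular cardinal, J := [κ]^{<κ} the ideal of subsets of κ of cardinality < κ, and Ā = ⟨A_ε : ε < κ⟩ a sequence of sets with |A_ε| ≥ 2^κ for every ε < κ. Assume that for every u ⊆ κ of cardinality κ, T⁺_{J↾u}(Ā↾u) = T⁺_J(Ā), where J↾u := {a ⊆ u : |a| < κ}. Then 𝐓⁺_J(Ā) = T⁺_J(Ā). -/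
open Cardinal Set

namespace BB

/-- Witnessing families for `T⁺_J(Ā)`, over the index set `X`: families of
total functions with values in `A i ∪ {0}` on `X` (and `0` off `X`),
any two of which differ in a `J`-large way. -/
def TWit (X : Set Ordinal) (J : Set (Set Ordinal)) (A : Ordinal → Set Ordinal)
    (Λ : Set (Ordinal → Ordinal)) : Prop :=
  (∀ η ∈ Λ, (∀ i ∈ X, η i ∈ A i ∪ {0}) ∧ ∀ i, i ∉ X → η i = 0) ∧
  ∀ η ∈ Λ, ∀ ν ∈ Λ, η ≠ ν →
    (X \ {i | i ∈ X ∧ η i ≠ 0 ∧ ν i ≠ 0 ∧ η i ≠ ν i}) ∈ J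

/-- `T⁺_J(Ā)`: the least `λ` such that there is no witnessing family of
cardinality `≥ λ`. -/
noncomputable def Tplus (X : Set Ordinal) (J : Set (Set Ordinal))
    (A : Ordinal → Set Ordinal) : Cardinal :=
  sInf {lam : Cardinal |
    ¬ ∃ Λ : Set (Ordinal → Ordinal), TWit X J A Λ ∧ cLift lam ≤ Cardinal.mk Λ}

/-- Witnessing families for `𝐓⁺_J(Ā)`: families of partial functions, coded as
pairs `(dom, values)` with domain in `J⁺`, any two of which agree only on a
`J`-small set. -/
def BTWit (X : Set Ordinal) (J : Set (Set Ordinal)) (A : Ordinal → Set Ordinal)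
    (Λ : Set ((Set Ordinal) × (Ordinal → Ordinal))) : Prop :=
  (∀ p ∈ Λ, p.1 ⊆ X ∧ p.1 ∉ J ∧ (∀ i ∈ p.1, p.2 i ∈ A i ∪ {0}) ∧
    ∀ i, i ∉ p.1 → p.2 i = 0) ∧
  ∀ p ∈ Λ, ∀ q ∈ Λ, p ≠ q → {i | i ∈ p.1 ∩ q.1 ∧ p.2 i = q.2 i} ∈ J

/-- `𝐓⁺_J(Ā)`. -/
noncomputable def BTplus (X : Set Ordinal) (J : Set (Set Ordinal))
    (A : Ordinal → Set Ordinal) : Cardinal :=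
  sInf {lam : Cardinal |
    ¬ ∃ Λ : Set ((Set Ordinal) × (Ordinal → Ordinal)),
      BTWit X J A Λ ∧ cLift lam ≤ Cardinal.mk Λ}

/-! ### auxiliary development -/

open scoped Classical

/-- the `< κ` ideal on `u`. -/
def idl (κ : Cardinal.{0}) (u : Set Ordinal.{0}) : Set (Set Ordinal.{0}) :=
  {a | a ⊆ u ∧ Cardinal.mk a < cLift κ}

lemma mem_idl {κ : Cardinal} {u a : Set Ordinal} :
    a ∈ idl κ u ↔ a ⊆ u ∧ Cardinal.mk a < cLift κ := Iff.rfl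

lemma mkX (κ : Cardinal.{0}) : Cardinal.mk (Set.Iio κ.ord) = cLift κ := by
  rw [Ordinal.mk_Iio_ordinal, Cardinal.card_ord]

lemma aleph0_le_cllift {κ : Cardinal} (hκ : κ.IsRegular) : ℵ₀ ≤ cLift κ :=
  Cardinal.aleph0_le_lift.2 hκ.aleph0_le

lemma aleph0_le_c2 {κ : Cardinal} (hκ : κ.IsRegular) : ℵ₀ ≤ cLift (2 ^ κ) :=
  Cardinal.aleph0_le_lift.2 (hκ.aleph0_le.trans (Cardinal.cantor κ).le)

lemma c2_eq (κ : Cardinal.{0}) : cLift (2 ^ κ) = 2 ^ cLift κ := by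
  rw [cLift, Cardinal.lift_power]; norm_num

lemma twit_empty (X : Set Ordinal) (J : Set (Set Ordinal)) (A : Ordinal → Set Ordinal) :
    TWit X J A (∅ : Set (Ordinal → Ordinal)) := by
  constructor <;> intro η hη <;> exact absurd hη (Set.notMem_empty η)


/-- Transfer a witnessing family on `u` to the full index set, via `hrestr`. -/
lemma transfer {κ : Cardinal.{0}} {A : Ordinal → Set Ordinal}
    (hrestr : ∀ u : Set Ordinal, u ⊆ Set.Iio κ.ord → Cardinal.mk u = cLift κ →
      Tplus u (idl κ u) A = Tplus (Set.Iio κ.ord) (idl κ (Set.Iio κ.ord)) A)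
    {u : Set Ordinal} (hu : u ⊆ Set.Iio κ.ord) (hmku : Cardinal.mk u = cLift κ)
    {F : Set (Ordinal → Ordinal)} (hF : TWit u (idl κ u) A F)
    {ν : Cardinal.{0}} (hν : cLift ν ≤ Cardinal.mk F) :
    ∃ Λ : Set (Ordinal → Ordinal),
      TWit (Set.Iio κ.ord) (idl κ (Set.Iio κ.ord)) A Λ ∧ cLift ν ≤ Cardinal.mk Λ := by
  by_contra hcon
  set SX : Set Cardinal := {lam : Cardinal |
    ¬ ∃ Λ : Set (Ordinal → Ordinal),
      TWit (Set.Iio κ.ord) (idl κ (Set.Iio κ.ord)) A Λ ∧ cLift lam ≤ Cardinal.mk Λ} with hSXdef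
  set Su : Set Cardinal := {lam : Cardinal |
    ¬ ∃ Λ : Set (Ordinal → Ordinal),
      TWit u (idl κ u) A Λ ∧ cLift lam ≤ Cardinal.mk Λ} with hSudef
  have hνSX : ν ∈ SX := hcon
  have hνSu : ν ∉ Su := fun h => h ⟨F, hF, hν⟩
  have hTu : Tplus u (idl κ u) A = sInf Su := rfl
  have hTX : Tplus (Set.Iio κ.ord) (idl κ (Set.Iio κ.ord)) A = sInf SX := rfl
  have h0SX : (0 : Cardinal) ∉ SX := by
    intro h
    exact h ⟨∅, twit_empty _ _ _, by simp⟩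
  have hXne : SX.Nonempty := ⟨ν, hνSX⟩
  have hinfSX : sInf SX ∈ SX := csInf_mem hXne
  rcases Set.eq_empty_or_nonempty Su with hSu | hSu
  · have : sInf Su = 0 := by rw [hSu]; exact Cardinal.sInf_empty
    have h2 : sInf SX = 0 := by
      rw [← hTX, ← hrestr u hu hmku, hTu, this]
    exact h0SX (h2 ▸ hinfSX)
  · have hinfSu : sInf Su ∈ Su := csInf_mem hSu
    have hlt : ν < sInf Su := by
      by_contra h
      push_neg at h
      obtain ⟨Λ, hΛ1, hΛ2⟩ := not_not.1 hνSu
      exact hinfSu ⟨Λ, hΛ1, le_trans (Cardinal.lift_le.2 h) hΛ2⟩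
    have : sInf SX ≤ ν := csInf_le (OrderBot.bddBelow _) hνSX
    rw [← hTX, ← hrestr u hu hmku, hTu] at this
    exact absurd this (not_le.2 hlt)

/-- A witnessing family of size `lam` whenever `lam ≤ 2^κ`. -/
lemma ET_le_pow {κ : Cardinal.{0}} {A : Ordinal → Set Ordinal} (hκ : κ.IsRegular)
    (h0 : ∀ ε < κ.ord, (0 : Ordinal) ∉ A ε)
    (hbig : ∀ ε < κ.ord, cLift ((2 : Cardinal) ^ κ) ≤ Cardinal.mk (A ε))
    {lam : Cardinal.{0}} (hlam : lam ≤ 2 ^ κ) :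
    ∃ Λ : Set (Ordinal → Ordinal),
      TWit (Set.Iio κ.ord) (idl κ (Set.Iio κ.ord)) A Λ ∧ cLift lam ≤ Cardinal.mk Λ := by
  set I0 : Type 1 := ULift.{1} (Quotient.out lam) with hI0
  have hmkI0 : Cardinal.mk I0 = cLift lam := by
    rw [hI0, Cardinal.mk_uLift, Cardinal.mk_out]
  have hg : ∀ ε : Ordinal, ∃ g : I0 → Ordinal,
      ε ∈ Set.Iio κ.ord → (∀ t, g t ∈ A ε) ∧ Function.Injective g := by
    intro ε
    by_cases hε : ε ∈ Set.Iio κ.ord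
    · have hle : Cardinal.mk I0 ≤ Cardinal.mk (A ε) := by
        rw [hmkI0]
        exact le_trans (Cardinal.lift_le.2 hlam) (hbig ε hε)
      obtain ⟨e⟩ := (Cardinal.le_def _ _).1 hle
      refine ⟨fun t => (e t : Ordinal), fun _ => ⟨fun t => (e t).2, ?_⟩⟩
      intro a b hab
      exact e.injective (Subtype.ext hab)
    · exact ⟨fun _ => 0, fun hx => absurd hx hε⟩
  choose g hg using hg
  classical
  set η : I0 → (Ordinal → Ordinal) :=
    fun t ε => if ε ∈ Set.Iio κ.ord then g ε t else 0 with hηdef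
  have hzX : (0 : Ordinal) ∈ Set.Iio κ.ord :=
    Cardinal.lt_ord.2 (by rw [Ordinal.card_zero]; exact hκ.pos)
  have hηinj : Function.Injective η := by
    intro t s hts
    by_contra hne
    have h1 : η t 0 = g 0 t := if_pos hzX
    have h2 : η s 0 = g 0 s := if_pos hzX
    have := congrFun hts 0
    rw [h1, h2] at this
    exact hne ((hg 0 hzX).2 this)
  refine ⟨Set.range η, ⟨?_, ?_⟩, ?_⟩
  · rintro _ ⟨t, rfl⟩
    constructor
    · intro i hi
      have h1 : η t i = g i t := if_pos hi
      rw [h1]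
      exact Or.inl ((hg i hi).1 t)
    · intro i hi
      exact if_neg hi
  · rintro _ ⟨t, rfl⟩ _ ⟨s, rfl⟩ hne
    have hts : t ≠ s := fun h => hne (by rw [h])
    have hsub : Set.Iio κ.ord ⊆
        {i | i ∈ Set.Iio κ.ord ∧ η t i ≠ 0 ∧ η s i ≠ 0 ∧ η t i ≠ η s i} := by
      intro i hi
      have h1 : η t i = g i t := if_pos hi
      have h2 : η s i = g i s := if_pos hi
      refine ⟨hi, ?_, ?_, ?_⟩
      · rw [h1]; exact fun h => h0 i hi (h ▸ (hg i hi).1 t)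
      · rw [h2]; exact fun h => h0 i hi (h ▸ (hg i hi).1 s)
      · rw [h1, h2]; exact fun h => hts ((hg i hi).2 h)
    have hempty : Set.Iio κ.ord \
        {i | i ∈ Set.Iio κ.ord ∧ η t i ≠ 0 ∧ η s i ≠ 0 ∧ η t i ≠ η s i} = ∅ :=
      Set.diff_eq_empty.2 hsub
    rw [hempty]
    exact ⟨Set.empty_subset _, by
      rw [Cardinal.mk_emptyCollection]
      exact lt_of_lt_of_le Cardinal.aleph0_pos (aleph0_le_cllift hκ)⟩
  · rw [Cardinal.mk_range_eq _ hηinj, hmkI0]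


/-- From a fiber of a `BTWit` family with fixed domain `u`, of size `> 2^κ`,
extract a `TWit` family on `u` of the same size. -/
lemma fiber_to_twit {κ : Cardinal.{0}} {A : Ordinal → Set Ordinal} (hκ : κ.IsRegular)
    (h0 : ∀ ε < κ.ord, (0 : Ordinal) ∉ A ε)
    (hbig : ∀ ε < κ.ord, cLift ((2 : Cardinal) ^ κ) ≤ Cardinal.mk (A ε))
    {Λ : Set ((Set Ordinal) × (Ordinal → Ordinal))}
    (hBT : BTWit (Set.Iio κ.ord) (idl κ (Set.Iio κ.ord)) A Λ)
    (u : Set Ordinal) {σ : Cardinal.{1}} (hσ : cLift (2 ^ κ) < σ)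
    (hfib : σ ≤ Cardinal.mk {p ∈ Λ | p.1 = u}) :
    ∃ F : Set (Ordinal → Ordinal),
      TWit u (idl κ u) A F ∧ σ ≤ Cardinal.mk F ∧ u ⊆ Set.Iio κ.ord ∧
        Cardinal.mk u = cLift κ := by
  classical
  have hκℵ : ℵ₀ ≤ cLift κ := aleph0_le_cllift hκ
  have hσℵ : ℵ₀ ≤ σ := le_trans (aleph0_le_c2 hκ) hσ.le
  set Λfib : Set ((Set Ordinal) × (Ordinal → Ordinal)) := {p ∈ Λ | p.1 = u} with hΛfib
  -- `u` is a subset of `X` of full size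
  have hfibne : Λfib.Nonempty := by
    rw [← Set.nonempty_coe_sort, ← Cardinal.mk_ne_zero_iff]
    intro h
    rw [h, le_zero_iff] at hfib
    rw [hfib, le_zero_iff] at hσℵ
    exact Cardinal.aleph0_ne_zero hσℵ
  obtain ⟨p0, hp0Λ, hp0u⟩ := hfibne
  have huX : u ⊆ Set.Iio κ.ord := hp0u ▸ (hBT.1 p0 hp0Λ).1
  have hmku : Cardinal.mk u = cLift κ := by
    have hle : Cardinal.mk u ≤ cLift κ := by
      rw [← mkX κ]; exact Cardinal.mk_le_mk_of_subset huX
    have hnlt : ¬ Cardinal.mk u < cLift κ := by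
      intro h
      exact (hp0u ▸ (hBT.1 p0 hp0Λ).2.1) ⟨hp0u ▸ (hBT.1 p0 hp0Λ).1, h⟩
    exact le_antisymm hle (not_lt.1 hnlt)
  -- zero sets
  set Z : (Set Ordinal) × (Ordinal → Ordinal) → Set Ordinal :=
    fun p => {ε | ε ∈ u ∧ p.2 ε = 0} with hZ
  set Λs : Set ((Set Ordinal) × (Ordinal → Ordinal)) :=
    {p ∈ Λfib | Cardinal.mk (Z p) < cLift κ} with hΛs
  set Λb : Set ((Set Ordinal) × (Ordinal → Ordinal)) :=
    {p ∈ Λfib | ¬ Cardinal.mk (Z p) < cLift κ} with hΛb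
  -- the big-zero part is small
  have hΛbsmall : Cardinal.mk Λb ≤ cLift (2 ^ κ) := by
    have hinj : Function.Injective (fun p : Λb => (⟨Z p.1, fun ε hε => hε.1⟩ : 𝒫 u)) := by
      rintro ⟨p, hpfib, hpZ⟩ ⟨q, hqfib, hqZ⟩ hpq
      simp only [Subtype.mk.injEq] at hpq ⊢
      by_contra hne
      have hpq' : p ≠ q := fun h => hne (by rw [h])
      have hagr := hBT.2 p hpfib.1 q hqfib.1 hpq'
      have hsub : Z p ⊆ {i | i ∈ p.1 ∩ q.1 ∧ p.2 i = q.2 i} := by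
        intro ε hε
        have hε' : ε ∈ Z q := by
          have e : Z p = Z q := congrArg Subtype.val hpq
          exact e ▸ hε
        exact ⟨⟨hpfib.2 ▸ hε.1, hqfib.2 ▸ hε'.1⟩, by rw [hε.2, hε'.2]⟩
      exact hpZ (lt_of_le_of_lt (Cardinal.mk_le_mk_of_subset hsub) hagr.2)
    calc Cardinal.mk Λb ≤ Cardinal.mk (𝒫 u) := Cardinal.mk_le_of_injective hinj
      _ = Cardinal.mk (Set u) := Cardinal.mk_congr (Equiv.Set.powerset u)
      _ = 2 ^ Cardinal.mk u := Cardinal.mk_set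
      _ = cLift (2 ^ κ) := by rw [hmku, c2_eq]
  -- hence the small-zero part is large
  have hΛssize : σ ≤ Cardinal.mk Λs := by
    by_contra h
    push_neg at h
    have hcover : Λfib ⊆ Λs ∪ Λb := by
      intro p hp
      by_cases hz : Cardinal.mk (Z p) < cLift κ
      · exact Or.inl ⟨hp, hz⟩
      · exact Or.inr ⟨hp, hz⟩
    have : Cardinal.mk Λfib < σ :=
      lt_of_le_of_lt (le_trans (Cardinal.mk_le_mk_of_subset hcover) (Cardinal.mk_union_le _ _))
        (Cardinal.add_lt_of_lt hσℵ h (lt_of_le_of_lt hΛbsmall hσ))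
    exact absurd hfib (not_le.2 this)
  -- default values
  have haa : ∀ ε : Ordinal, ∃ a : Ordinal, ε ∈ Set.Iio κ.ord → a ∈ A ε := by
    intro ε
    by_cases hε : ε ∈ Set.Iio κ.ord
    · have : Cardinal.mk (A ε) ≠ 0 := by
        intro h
        have := hbig ε hε
        rw [h] at this
        exact absurd (le_zero_iff.1 (le_trans (aleph0_le_c2 hκ) this))
          Cardinal.aleph0_ne_zero
      obtain ⟨a⟩ := Cardinal.mk_ne_zero_iff.1 this
      exact ⟨a, fun _ => a.2⟩
    · exact ⟨0, fun h => absurd h hε⟩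
  choose aa haa using haa
  set h : (Set Ordinal) × (Ordinal → Ordinal) → (Ordinal → Ordinal) :=
    fun p ε => if ε ∈ u ∧ p.2 ε = 0 then aa ε else p.2 ε with hhdef
  -- key pointwise facts
  have hval : ∀ p ∈ Λs, ∀ ε ∈ u, h p ε ∈ A ε := by
    intro p hp ε hε
    by_cases hz : p.2 ε = 0
    · have he : h p ε = aa ε := if_pos ⟨hε, hz⟩
      rw [he]; exact haa ε (huX hε)
    · have he : h p ε = p.2 ε := if_neg (fun hc => hz hc.2)
      rw [he]
      rcases (hBT.1 p hp.1.1).2.2.1 ε (hp.1.2.symm ▸ hε) with h1 | h1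
      · exact h1
      · exact absurd h1 hz
  have hzero : ∀ p ∈ Λs, ∀ ε, ε ∉ u → h p ε = 0 := by
    intro p hp ε hε
    have he : h p ε = p.2 ε := if_neg (fun hc => hε hc.1)
    rw [he]
    exact (hBT.1 p hp.1.1).2.2.2 ε (fun hm => hε (hp.1.2 ▸ hm))
  have hinj : Set.InjOn h Λs := by
    intro p hp q hq hpq
    by_contra hne
    have hagr := hBT.2 p hp.1.1 q hq.1.1 hne
    have hcover : u ⊆ {i | i ∈ p.1 ∩ q.1 ∧ p.2 i = q.2 i} ∪ (Z p ∪ Z q) := by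
      intro ε hε
      by_cases hzp : p.2 ε = 0
      · exact Or.inr (Or.inl ⟨hε, hzp⟩)
      by_cases hzq : q.2 ε = 0
      · exact Or.inr (Or.inr ⟨hε, hzq⟩)
      have e1 : h p ε = p.2 ε := if_neg (fun hc => hzp hc.2)
      have e2 : h q ε = q.2 ε := if_neg (fun hc => hzq hc.2)
      have := congrFun hpq ε
      rw [e1, e2] at this
      exact Or.inl ⟨⟨hp.1.2.symm ▸ hε, hq.1.2.symm ▸ hε⟩, this⟩
    have hlt : Cardinal.mk ({i | i ∈ p.1 ∩ q.1 ∧ p.2 i = q.2 i} ∪ (Z p ∪ Z q) :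
        Set Ordinal) < cLift κ := by
      refine lt_of_le_of_lt (le_trans (Cardinal.mk_union_le _ _)
        (add_le_add_right (Cardinal.mk_union_le _ _) _)) ?_
      exact Cardinal.add_lt_of_lt hκℵ hagr.2 (Cardinal.add_lt_of_lt hκℵ hp.2 hq.2)
    have := lt_of_le_of_lt (Cardinal.mk_le_mk_of_subset hcover) hlt
    rw [hmku] at this
    exact absurd this (lt_irrefl _)
  refine ⟨h '' Λs, ⟨?_, ?_⟩, ?_, huX, hmku⟩
  · rintro _ ⟨p, hp, rfl⟩
    exact ⟨fun ε hε => Or.inl (hval p hp ε hε), hzero p hp⟩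
  · rintro _ ⟨p, hp, rfl⟩ _ ⟨q, hq, rfl⟩ hne
    have hpq : p ≠ q := fun e => hne (by rw [e])
    have hagr := hBT.2 p hp.1.1 q hq.1.1 hpq
    have hsub : u \ {i | i ∈ u ∧ h p i ≠ 0 ∧ h q i ≠ 0 ∧ h p i ≠ h q i} ⊆
        {i | i ∈ p.1 ∩ q.1 ∧ p.2 i = q.2 i} ∪ (Z p ∪ Z q) := by
      rintro ε ⟨hεu, hεnD⟩
      have hnzp : h p ε ≠ 0 := fun e => h0 ε (huX hεu) (e ▸ hval p hp ε hεu)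
      have hnzq : h q ε ≠ 0 := fun e => h0 ε (huX hεu) (e ▸ hval q hq ε hεu)
      have heq : h p ε = h q ε := by
        by_contra hd
        exact hεnD ⟨hεu, hnzp, hnzq, hd⟩
      by_cases hzp : p.2 ε = 0
      · exact Or.inr (Or.inl ⟨hεu, hzp⟩)
      by_cases hzq : q.2 ε = 0
      · exact Or.inr (Or.inr ⟨hεu, hzq⟩)
      have e1 : h p ε = p.2 ε := if_neg (fun hc => hzp hc.2)
      have e2 : h q ε = q.2 ε := if_neg (fun hc => hzq hc.2)
      rw [e1, e2] at heq
      exact Or.inl ⟨⟨hp.1.2.symm ▸ hεu, hq.1.2.symm ▸ hεu⟩, heq⟩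
    refine ⟨Set.diff_subset, ?_⟩
    refine lt_of_le_of_lt (Cardinal.mk_le_mk_of_subset hsub) ?_
    refine lt_of_le_of_lt (le_trans (Cardinal.mk_union_le _ _)
      (add_le_add_right (Cardinal.mk_union_le _ _) _)) ?_
    exact Cardinal.add_lt_of_lt hκℵ hagr.2 (Cardinal.add_lt_of_lt hκℵ hp.2 hq.2)
  · rw [Cardinal.mk_image_eq_of_injOn h Λs hinj]
    exact hΛssize

/-- Glue at most `2^κ` many witnessing families into one. -/
lemma glue {κ : Cardinal.{0}} {A : Ordinal → Set Ordinal} (hκ : κ.IsRegular)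
    (h0 : ∀ ε < κ.ord, (0 : Ordinal) ∉ A ε)
    (hbig : ∀ ε < κ.ord, cLift ((2 : Cardinal) ^ κ) ≤ Cardinal.mk (A ε))
    {I : Type 1} (hI : Cardinal.mk I ≤ cLift (2 ^ κ))
    (F : I → Set (Ordinal → Ordinal))
    (hF : ∀ i, TWit (Set.Iio κ.ord) (idl κ (Set.Iio κ.ord)) A (F i)) :
    ∃ G : Set (Ordinal → Ordinal),
      TWit (Set.Iio κ.ord) (idl κ (Set.Iio κ.ord)) A G ∧
        ∀ i, Cardinal.mk (F i) ≤ Cardinal.mk G := by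
  classical
  have hc : ∀ ε : Ordinal, ∃ c : I → Ordinal → Ordinal, ε ∈ Set.Iio κ.ord →
      ((∀ i x, x ∈ A ε ∪ {0} → c i x ∈ A ε) ∧
       (∀ i x j y, x ∈ A ε ∪ {0} → y ∈ A ε ∪ {0} → c i x = c j y → i = j ∧ x = y)) := by
    intro ε
    by_cases hε : ε ∈ Set.Iio κ.ord
    · have hAinf : ℵ₀ ≤ Cardinal.mk (A ε) := le_trans (aleph0_le_c2 hκ) (hbig ε hε)
      have hle : Cardinal.mk (I × ↥(A ε ∪ {0} : Set Ordinal)) ≤ Cardinal.mk (A ε) := by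
        have h1 : Cardinal.mk (↥(A ε ∪ {0} : Set Ordinal)) ≤ Cardinal.mk (A ε) := by
          refine le_trans (Cardinal.mk_union_le _ _) ?_
          rw [Cardinal.mk_singleton]
          exact (Cardinal.add_one_eq hAinf).le
        calc Cardinal.mk (I × ↥(A ε ∪ {0} : Set Ordinal))
            = Cardinal.mk I * Cardinal.mk (↥(A ε ∪ {0} : Set Ordinal)) := by
              rw [Cardinal.mk_prod, Cardinal.lift_id, Cardinal.lift_id]
          _ ≤ cLift (2 ^ κ) * Cardinal.mk (A ε) := mul_le_mul' hI h1
          _ = Cardinal.mk (A ε) := Cardinal.mul_eq_right hAinf (hbig ε hε)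
              (Cardinal.aleph0_pos.trans_le (aleph0_le_c2 hκ)).ne'
      obtain ⟨e⟩ := (Cardinal.le_def _ _).1 hle
      refine ⟨fun i x => if h : x ∈ A ε ∪ {0} then (e (i, ⟨x, h⟩) : Ordinal) else 0,
        fun _ => ⟨?_, ?_⟩⟩
      · intro i x hx
        simp only [dif_pos hx]
        exact (e (i, ⟨x, hx⟩)).2
      · intro i x j y hx hy hxy
        simp only [dif_pos hx, dif_pos hy] at hxy
        have := e.injective (Subtype.ext hxy)
        have h1 : i = j := congrArg Prod.fst this
        have h2 : x = y := congrArg (fun p : I × ↥(A ε ∪ {0} : Set Ordinal) => (p.2 : Ordinal)) this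
        exact ⟨h1, h2⟩
    · exact ⟨fun _ _ => 0, fun h => absurd h hε⟩
  choose c hc using hc
  set tag : I → (Ordinal → Ordinal) → (Ordinal → Ordinal) :=
    fun i η ε => if ε ∈ Set.Iio κ.ord then c ε i (η ε) else 0 with htag
  set G : Set (Ordinal → Ordinal) := ⋃ i, tag i '' F i with hG
  have hmem : ∀ i, ∀ p ∈ F i, ∀ ε ∈ Set.Iio κ.ord, tag i p ε ∈ A ε := by
    intro i p hp ε hε
    have he : tag i p ε = c ε i (p ε) := if_pos hε
    rw [he]
    exact (hc ε hε).1 i (p ε) (((hF i).1 p hp).1 ε hε)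
  have htagval : ∀ i p ε, ε ∈ Set.Iio κ.ord → tag i p ε = c ε i (p ε) :=
    fun i p ε hε => if_pos hε
  refine ⟨G, ⟨?_, ?_⟩, ?_⟩
  · intro η hη
    rw [hG, Set.mem_iUnion] at hη
    obtain ⟨i, p, hp, rfl⟩ := hη
    constructor
    · intro ε hε
      exact Or.inl (hmem i p hp ε hε)
    · intro ε hε
      exact if_neg hε
  · intro η hη ν hν hne
    rw [hG, Set.mem_iUnion] at hη hν
    obtain ⟨i, p, hp, rfl⟩ := hη
    obtain ⟨j, q, hq, rfl⟩ := hν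
    have hnzp : ∀ ε ∈ Set.Iio κ.ord, tag i p ε ≠ 0 :=
      fun ε hε e => h0 ε hε (e ▸ hmem i p hp ε hε)
    have hnzq : ∀ ε ∈ Set.Iio κ.ord, tag j q ε ≠ 0 :=
      fun ε hε e => h0 ε hε (e ▸ hmem j q hq ε hε)
    by_cases hij : i = j
    · subst hij
      have hpqne : p ≠ q := fun e => hne (by rw [e])
      have hD := (hF i).2 p hp q hq hpqne
      refine ⟨Set.diff_subset, ?_⟩
      refine lt_of_le_of_lt (Cardinal.mk_le_mk_of_subset ?_) hD.2
      rintro ε ⟨hεX, hεn⟩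
      refine ⟨hεX, ?_⟩
      rintro ⟨-, hp0, hq0, hpq⟩
      apply hεn
      refine ⟨hεX, hnzp ε hεX, hnzq ε hεX, ?_⟩
      intro heq
      rw [htagval i p ε hεX, htagval i q ε hεX] at heq
      exact hpq ((hc ε hεX).2 i (p ε) i (q ε) (((hF i).1 p hp).1 ε hεX)
        (((hF i).1 q hq).1 ε hεX) heq).2
    · have hsub : Set.Iio κ.ord ⊆
          {ε | ε ∈ Set.Iio κ.ord ∧ tag i p ε ≠ 0 ∧ tag j q ε ≠ 0 ∧ tag i p ε ≠ tag j q ε} := by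
        intro ε hε
        refine ⟨hε, hnzp ε hε, hnzq ε hε, ?_⟩
        intro heq
        rw [htagval i p ε hε, htagval j q ε hε] at heq
        exact hij ((hc ε hε).2 i (p ε) j (q ε) (((hF i).1 p hp).1 ε hε)
          (((hF j).1 q hq).1 ε hε) heq).1
      have hd : Set.Iio κ.ord \
          {ε | ε ∈ Set.Iio κ.ord ∧ tag i p ε ≠ 0 ∧ tag j q ε ≠ 0 ∧ tag i p ε ≠ tag j q ε} = ∅ :=
        Set.diff_eq_empty.2 hsub
      rw [hd]
      refine ⟨Set.empty_subset _, ?_⟩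
      rw [Cardinal.mk_emptyCollection]
      exact lt_of_lt_of_le Cardinal.aleph0_pos (aleph0_le_cllift hκ)
  · intro i
    have hinj : Set.InjOn (tag i) (F i) := by
      intro p hp q hq hpq
      funext ε
      by_cases hε : ε ∈ Set.Iio κ.ord
      · have := congrFun hpq ε
        rw [htagval i p ε hε, htagval i q ε hε] at this
        exact ((hc ε hε).2 i (p ε) i (q ε) (((hF i).1 p hp).1 ε hε)
          (((hF i).1 q hq).1 ε hε) this).2
      · rw [((hF i).1 p hp).2 ε hε, ((hF i).1 q hq).2 ε hε]
    rw [← Cardinal.mk_image_eq_of_injOn (tag i) (F i) hinj]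
    exact Cardinal.mk_le_mk_of_subset
      (hG ▸ Set.subset_iUnion (fun i => tag i '' F i) i)

/-- The hard direction: a large `BTWit` family yields a large `TWit` family. -/
lemma EBT_to_ET {κ : Cardinal.{0}} {A : Ordinal → Set Ordinal} (hκ : κ.IsRegular)
    (h0 : ∀ ε < κ.ord, (0 : Ordinal) ∉ A ε)
    (hbig : ∀ ε < κ.ord, cLift ((2 : Cardinal) ^ κ) ≤ Cardinal.mk (A ε))
    (hrestr : ∀ u : Set Ordinal, u ⊆ Set.Iio κ.ord → Cardinal.mk u = cLift κ →
      Tplus u (idl κ u) A = Tplus (Set.Iio κ.ord) (idl κ (Set.Iio κ.ord)) A)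
    {lam : Cardinal.{0}}
    (hE : ∃ Λ : Set ((Set Ordinal) × (Ordinal → Ordinal)),
      BTWit (Set.Iio κ.ord) (idl κ (Set.Iio κ.ord)) A Λ ∧ cLift lam ≤ Cardinal.mk Λ) :
    ∃ Λ : Set (Ordinal → Ordinal),
      TWit (Set.Iio κ.ord) (idl κ (Set.Iio κ.ord)) A Λ ∧ cLift lam ≤ Cardinal.mk Λ := by
  classical
  rcases le_or_gt lam (2 ^ κ) with hlam | hlam
  · exact ET_le_pow hκ h0 hbig hlam
  obtain ⟨Λ, hBT, hsz⟩ := hE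
  have hc2lt : cLift (2 ^ κ) < cLift lam := Cardinal.lift_lt.2 hlam
  by_cases hA : ∃ u : Set Ordinal, cLift lam ≤ Cardinal.mk {p ∈ Λ | p.1 = u}
  · obtain ⟨u, hu⟩ := hA
    obtain ⟨F, hF, hsz', huX, hmku⟩ := fiber_to_twit hκ h0 hbig hBT u hc2lt hu
    exact transfer hrestr huX hmku hF hsz'
  · push_neg at hA
    set I : Type 1 := ↥(𝒫 (Set.Iio κ.ord)) with hI
    haveI : Nonempty I := ⟨⟨∅, Set.empty_subset _⟩⟩
    have hIcard : Cardinal.mk I = cLift (2 ^ κ) := by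
      rw [hI]
      calc Cardinal.mk (↥(𝒫 (Set.Iio κ.ord)))
          = Cardinal.mk (Set (Set.Iio κ.ord)) := Cardinal.mk_congr (Equiv.Set.powerset _)
        _ = 2 ^ Cardinal.mk (Set.Iio κ.ord) := Cardinal.mk_set
        _ = cLift (2 ^ κ) := by rw [mkX, c2_eq]
    set Λfib : I → Set ((Set Ordinal) × (Ordinal → Ordinal)) :=
      fun i => {p ∈ Λ | p.1 = (i : Set Ordinal)} with hΛfib
    have hFex : ∀ i : I, ∃ F : Set (Ordinal → Ordinal),
        TWit (Set.Iio κ.ord) (idl κ (Set.Iio κ.ord)) A F ∧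
        (cLift (2 ^ κ) < Cardinal.mk (Λfib i) → Cardinal.mk (Λfib i) ≤ Cardinal.mk F) := by
      intro i
      by_cases hg : cLift (2 ^ κ) < Cardinal.mk (Λfib i)
      · have hlt : Cardinal.mk (Λfib i) < cLift lam := hA (i : Set Ordinal)
        obtain ⟨ν, hνlam, hνe⟩ := Cardinal.lt_lift_iff.1 hlt
        obtain ⟨F, hF, hsz', huX, hmku⟩ :=
          fiber_to_twit hκ h0 hbig hBT (i : Set Ordinal) hg le_rfl
        obtain ⟨F', hF', hsz''⟩ := transfer hrestr huX hmku hF (hνe.le.trans hsz')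
        exact ⟨F', hF', fun _ => hνe.symm.le.trans hsz''⟩
      · exact ⟨∅, twit_empty _ _ _, fun hcc => absurd hcc hg⟩
    choose Ffam hF1 hF2 using hFex
    obtain ⟨G, hG, hGsz⟩ := glue hκ h0 hbig (le_of_eq hIcard) Ffam hF1
    refine ⟨G, hG, ?_⟩
    have hcov : Λ ⊆ ⋃ i, Λfib i := fun p hp =>
      Set.mem_iUnion.2 ⟨⟨p.1, (hBT.1 p hp).1⟩, hp, rfl⟩
    have h1 : cLift lam ≤ Cardinal.mk I * ⨆ i, Cardinal.mk (Λfib i) :=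
      le_trans hsz (le_trans (Cardinal.mk_le_mk_of_subset hcov) (Cardinal.mk_iUnion_le _))
    have h2 : (⨆ i, Cardinal.mk (Λfib i)) ≤ cLift (2 ^ κ) ⊔ Cardinal.mk G := by
      refine ciSup_le' fun i => ?_
      by_cases hg : cLift (2 ^ κ) < Cardinal.mk (Λfib i)
      · exact le_sup_of_le_right (le_trans (hF2 i hg) (hGsz i))
      · exact le_sup_of_le_left (not_lt.1 hg)
    have h3 : cLift lam ≤ cLift (2 ^ κ) ⊔ Cardinal.mk G := by
      have h4 := le_trans h1 (mul_le_mul' hIcard.le h2)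
      rwa [Cardinal.mul_eq_right (le_trans (aleph0_le_c2 hκ) le_sup_left) le_sup_left
        (Cardinal.aleph0_pos.trans_le (aleph0_le_c2 hκ)).ne'] at h4
    rcases le_sup_iff.1 h3 with h | h
    · exact absurd h (not_le.2 hc2lt)
    · exact h

/-- The easy direction: a `TWit` family yields a `BTWit` family. -/
lemma ET_to_EBT {κ : Cardinal.{0}} {A : Ordinal → Set Ordinal} (hκ : κ.IsRegular)
    {lam : Cardinal.{0}}
    (hE : ∃ Λ : Set (Ordinal → Ordinal),
      TWit (Set.Iio κ.ord) (idl κ (Set.Iio κ.ord)) A Λ ∧ cLift lam ≤ Cardinal.mk Λ) :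
    ∃ Λ : Set ((Set Ordinal) × (Ordinal → Ordinal)),
      BTWit (Set.Iio κ.ord) (idl κ (Set.Iio κ.ord)) A Λ ∧ cLift lam ≤ Cardinal.mk Λ := by
  obtain ⟨Λ, hT, hsz⟩ := hE
  refine ⟨(fun η => ((Set.Iio κ.ord : Set Ordinal), η)) '' Λ, ⟨?_, ?_⟩, ?_⟩
  · rintro _ ⟨η, hη, rfl⟩
    refine ⟨subset_rfl, ?_, fun i hi => (hT.1 η hη).1 i hi, fun i hi => (hT.1 η hη).2 i hi⟩
    intro hmem
    exact absurd hmem.2 (by rw [mkX]; exact lt_irrefl _)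
  · rintro _ ⟨η, hη, rfl⟩ _ ⟨ν, hν, rfl⟩ hne
    have hηνne : η ≠ ν := fun e => hne (by rw [e])
    have hD := hT.2 η hη ν hν hηνne
    have hsub : {i | i ∈ Set.Iio κ.ord ∩ Set.Iio κ.ord ∧ η i = ν i} ⊆
        Set.Iio κ.ord \
          {i | i ∈ Set.Iio κ.ord ∧ η i ≠ 0 ∧ ν i ≠ 0 ∧ η i ≠ ν i} := by
      rintro i ⟨⟨hiX, -⟩, heq⟩
      exact ⟨hiX, fun hd => hd.2.2.2 heq⟩
    exact ⟨fun i hi => hi.1.1, lt_of_le_of_lt (Cardinal.mk_le_mk_of_subset hsub) hD.2⟩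
  · rw [Cardinal.mk_image_eq_of_injOn _ _ (fun a _ b _ h => congrArg Prod.snd h)]
    exact hsz

theorem stmt18 (κ : Cardinal) (A : Ordinal → Set Ordinal)
    (hκ : κ.IsRegular)
    (h0 : ∀ ε < κ.ord, (0 : Ordinal) ∉ A ε)
    (hbig : ∀ ε < κ.ord, cLift ((2 : Cardinal) ^ κ) ≤ Cardinal.mk (A ε))
    (hrestr : ∀ u : Set Ordinal, u ⊆ Set.Iio κ.ord → Cardinal.mk u = cLift κ →
      Tplus u {a | a ⊆ u ∧ Cardinal.mk a < cLift κ} A =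
        Tplus (Set.Iio κ.ord) {a | a ⊆ Set.Iio κ.ord ∧ Cardinal.mk a < cLift κ} A) :
    BTplus (Set.Iio κ.ord) {a | a ⊆ Set.Iio κ.ord ∧ Cardinal.mk a < cLift κ} A =
      Tplus (Set.Iio κ.ord) {a | a ⊆ Set.Iio κ.ord ∧ Cardinal.mk a < cLift κ} A := by
  have hrestr' : ∀ u : Set Ordinal, u ⊆ Set.Iio κ.ord → Cardinal.mk u = cLift κ →
      Tplus u (idl κ u) A = Tplus (Set.Iio κ.ord) (idl κ (Set.Iio κ.ord)) A := hrestr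
  show BTplus (Set.Iio κ.ord) (idl κ (Set.Iio κ.ord)) A =
      Tplus (Set.Iio κ.ord) (idl κ (Set.Iio κ.ord)) A
  have hsets : {lam : Cardinal | ¬ ∃ Λ : Set ((Set Ordinal) × (Ordinal → Ordinal)),
        BTWit (Set.Iio κ.ord) (idl κ (Set.Iio κ.ord)) A Λ ∧ cLift lam ≤ Cardinal.mk Λ} =
      {lam : Cardinal | ¬ ∃ Λ : Set (Ordinal → Ordinal),
        TWit (Set.Iio κ.ord) (idl κ (Set.Iio κ.ord)) A Λ ∧ cLift lam ≤ Cardinal.mk Λ} := by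
    ext lam
    simp only [Set.mem_setOf_eq]
    exact not_congr ⟨fun h => EBT_to_ET hκ h0 hbig hrestr' h, fun h => ET_to_EBT hκ h⟩
  unfold BTplus Tplus
  rw [hsets]

end BB
end
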